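/- Let k ⊆ M ⊆ N be field extensions, and let σ be a ring automorphism of N with σ(k) = k and σ(M) ⊆ M. Suppose that M is relatively algebraically closed in N (every element of N that is algebraic over M lies in M) and that M has finite transcendence degree over k. Then σ(M) = M, i.e., σ restricts to an automorphism of M. -/

import Mathlib

open Algebra

section Transfer
variable {k₁ k₂ M : Type*} [CommRing k₁] [CommRing k₂] [CommRing M]
  [Algebra k₁ M] [Algebra k₂ M]

/-- Inclusion ring hom between coercions of subalgebras (over possibly different base rings)
with one carrier contained in the other. -/
def Subalgebra.incl (A : Subalgebra k₁ M) (B : Subalgebra k₂ M) (h : (A : Set M) ⊆ B) :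
    A →+* B where
  toFun a := ⟨a.1, h a.2⟩
  map_one' := rfl
  map_mul' _ _ := rfl
  map_zero' := rfl
  map_add' _ _ := rfl

theorem isAlgebraic_of_le {A : Subalgebra k₁ M} {B : Subalgebra k₂ M}
    (h : (A : Set M) ⊆ B) {x : M} (hx : IsAlgebraic A x) : IsAlgebraic B x := by
  have := hx.ringHom_of_comp_eq (Subalgebra.incl A B h) (RingHom.id M)
    (fun a b hab => by
      apply Subtype.ext
      exact congrArg (fun z : B => z.1) hab)
    (by ext a; rfl)
  simpa using this

theorem transcendental_of_le {A : Subalgebra k₁ M} {B : Subalgebra k₂ M}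
    (h : (A : Set M) ⊆ B) {x : M} (hx : Transcendental B x) : Transcendental A x :=
  fun halg => hx (isAlgebraic_of_le h halg)

end Transfer

section Bridge
variable {k M : Type*} [Field k] [Field M] [Algebra k M] (S : Set M)

noncomputable instance bridgeAlg : Algebra (adjoin k S) (IntermediateField.adjoin k S) :=
  (Subalgebra.inclusion (IntermediateField.algebra_adjoin_le_adjoin k S)).toRingHom.toAlgebra

instance : IsScalarTower (adjoin k S) (IntermediateField.adjoin k S) M :=
  IsScalarTower.of_algebraMap_eq (congrFun rfl)

theorem bridge_isFractionRing : IsFractionRing (adjoin k S) (IntermediateField.adjoin k S) where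
  map_units := by
    rintro ⟨y, hy⟩
    have hy0 : (y : M) ≠ 0 := by
      intro h
      apply nonZeroDivisors.coe_ne_zero ⟨y, hy⟩
      exact Subtype.ext h
    have : (algebraMap (adjoin k S) (IntermediateField.adjoin k S) y : M) = (y : M) := rfl
    rw [isUnit_iff_ne_zero]
    intro h
    rw [h] at this
    exact hy0 this.symm
  surj := by
    rintro ⟨z, hz⟩
    rw [IntermediateField.mem_adjoin_iff] at hz
    obtain ⟨r, s, hrs⟩ := hz
    have hr : MvPolynomial.aeval (Subtype.val : S → M) r ∈ adjoin k S := by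
      have : adjoin k (Set.range (Subtype.val : S → M)) = adjoin k S := by
        rw [Subtype.range_coe]
      rw [← this, Algebra.adjoin_range_eq_range_aeval]
      exact ⟨r, rfl⟩
    have hs : MvPolynomial.aeval (Subtype.val : S → M) s ∈ adjoin k S := by
      have : adjoin k (Set.range (Subtype.val : S → M)) = adjoin k S := by
        rw [Subtype.range_coe]
      rw [← this, Algebra.adjoin_range_eq_range_aeval]
      exact ⟨s, rfl⟩
    by_cases h0 : MvPolynomial.aeval (Subtype.val : S → M) s = 0
    · refine ⟨⟨0, 1⟩, ?_⟩
      apply Subtype.ext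
      show (z : M) * 1 = 0
      rw [hrs, h0, div_zero, zero_mul]
    · refine ⟨⟨⟨_, hr⟩, ⟨⟨_, hs⟩, mem_nonZeroDivisors_of_ne_zero (fun h => h0 (congrArg Subtype.val h))⟩⟩, ?_⟩
      apply Subtype.ext
      show (z : M) * MvPolynomial.aeval (Subtype.val : S → M) s = MvPolynomial.aeval (Subtype.val : S → M) r
      rw [hrs, div_mul_cancel₀]
      exact h0
  exists_of_eq := by
    intro x y h
    refine ⟨1, ?_⟩
    have : (x : M) = (y : M) := congrArg (fun z : IntermediateField.adjoin k S => (z : M)) h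
    simp [Subtype.ext this]

theorem bridge_isAlgebraic_iff {x : M} :
    IsAlgebraic (adjoin k S) x ↔ IsAlgebraic (IntermediateField.adjoin k S) x := by
  have := bridge_isFractionRing (k := k) (M := M) S
  exact IsFractionRing.isAlgebraic_iff (adjoin k S) (IntermediateField.adjoin k S) M

end Bridge

section Trans
variable {k M : Type*} [Field k] [Field M] [Algebra k M]

theorem isAlgebraic_adjoin_trans {V V₂ : Set M} (hV : ∀ v ∈ V, IsAlgebraic (adjoin k V₂) v)
    {x : M} (hx : IsAlgebraic (adjoin k V) x) : IsAlgebraic (adjoin k V₂) x := by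
  set F₂ := IntermediateField.adjoin k V₂
  have hVint : ∀ v ∈ V, IsIntegral F₂ v := by
    intro v hv
    rw [← isAlgebraic_iff_isIntegral]
    exact (bridge_isAlgebraic_iff V₂).mp (hV v hv)
  have halg : Algebra.IsAlgebraic F₂ (IntermediateField.adjoin F₂ V) :=
    IntermediateField.isAlgebraic_adjoin hVint
  have hx2 : IsAlgebraic (IntermediateField.adjoin F₂ V) x := by
    have hsub : ((adjoin k V : Subalgebra k M) : Set M) ⊆
        (((IntermediateField.adjoin F₂ V).toSubalgebra).restrictScalars k : Subalgebra k M) := by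
      rw [Subalgebra.coe_restrictScalars]
      intro a ha
      have : adjoin k V ≤ ((IntermediateField.adjoin F₂ V).toSubalgebra).restrictScalars k := by
        apply Algebra.adjoin_le
        intro v hv
        exact IntermediateField.subset_adjoin F₂ V hv
      exact this ha
    have h2 := isAlgebraic_of_le (B := ((IntermediateField.adjoin F₂ V).toSubalgebra).restrictScalars k)
      (by rw [Subalgebra.coe_restrictScalars]; exact fun a ha => hsub ha) hx
    exact isAlgebraic_of_le (A := ((IntermediateField.adjoin F₂ V).toSubalgebra).restrictScalars k)
      (B := (IntermediateField.adjoin F₂ V).toSubalgebra)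
      (by rw [Subalgebra.coe_restrictScalars]) h2
  have hint : IsIntegral F₂ x := by
    have h1 : IsIntegral (IntermediateField.adjoin F₂ V) x := isAlgebraic_iff_isIntegral.mp hx2
    have h2 : Algebra.IsIntegral F₂ (IntermediateField.adjoin F₂ V) :=
      Algebra.isAlgebraic_iff_isIntegral.mp halg
    exact isIntegral_trans x h1
  exact (bridge_isAlgebraic_iff V₂).mpr hint.isAlgebraic

end Trans

section Exchange
variable {k M : Type*} [Field k] [Field M] [Algebra k M]

theorem adjoin_insert_carrier (W : Set M) (s : M) :
    ((adjoin (adjoin k W) {s} : Subalgebra (adjoin k W) M) : Set M) =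
      ((adjoin k (insert s W) : Subalgebra k M) : Set M) := by
  rw [Set.insert_eq, Set.union_comm, Algebra.adjoin_union_eq_adjoin_adjoin,
    Subalgebra.coe_restrictScalars]

theorem exchange_step {W : Set M} {s t : M}
    (h1 : IsAlgebraic (adjoin k (insert s W)) t)
    (h2 : Transcendental (adjoin k W) t) :
    IsAlgebraic (adjoin k (insert t W)) s := by
  by_cases hs : IsAlgebraic (adjoin k W) s
  · refine isAlgebraic_of_le ?_ hs
    intro a ha
    exact adjoin_mono (Set.subset_insert t W) ha
  · have hs' : Transcendental (adjoin k W) s := hs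
    have i_s : AlgebraicIndependent (adjoin k W) (fun _ : Unit => s) :=
      algebraicIndependent_unique_type_iff.mpr hs'
    have i_t : AlgebraicIndependent (adjoin k W) (fun _ : Unit => t) :=
      algebraicIndependent_unique_type_iff.mpr h2
    have h1' : IsAlgebraic (adjoin (adjoin k W) {s}) t :=
      isAlgebraic_of_le (by rw [adjoin_insert_carrier]) h1
    have hP1 : ¬ AlgebraicIndependent (adjoin k W)
        (fun o : Option Unit => o.elim t (fun _ => s)) := by
      rw [i_s.option_iff_transcendental t]
      intro htr
      rw [Set.range_const] at htr
      exact htr h1'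
    have hP2 : ¬ AlgebraicIndependent (adjoin k W)
        (fun o : Option Unit => o.elim s (fun _ => t)) := by
      intro hcon
      apply hP1
      have hcomp : (fun o : Option Unit => o.elim t (fun _ => s)) =
          (fun o : Option Unit => o.elim s (fun _ => t)) ∘
            (Equiv.swap (none : Option Unit) (some ())) := by
        funext o
        match o with
        | none => simp
        | some () => simp
      rw [hcomp]
      exact (algebraicIndependent_equiv _).mpr hcon
    by_contra hcon
    apply hP2
    rw [i_t.option_iff_transcendental s, Set.range_const]
    exact transcendental_of_le (by rw [adjoin_insert_carrier]) hcon

end Exchange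

section Bound
variable {k M : Type*} [Field k] [Field M] [Algebra k M]

theorem indep_diff_transcendental {U : Set M}
    (hind : AlgebraicIndependent k (Subtype.val : U → M)) {t : M} (ht : t ∈ U) :
    Transcendental (adjoin k (U \ {t})) t := by
  have h1 : AlgebraicIndependent k (Subtype.val : (U \ {t} : Set M) → M) :=
    hind.mono Set.diff_subset
  have hg : Function.Injective (fun o : Option ↥(U \ {t}) =>
      (o.elim ⟨t, ht⟩ (fun x => ⟨x.1, x.2.1⟩) : ↥U)) := by
    rintro (_ | a) (_ | b) hab
    · rfl
    · exact absurd (congrArg (fun z : ↥U => z.1) hab) (fun h => b.2.2 h.symm)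
    · exact absurd (congrArg (fun z : ↥U => z.1) hab) (fun h => a.2.2 h)
    · exact congrArg some (Subtype.ext (congrArg (fun z : ↥U => z.1) hab))
  have h2 : AlgebraicIndependent k
      (fun o : Option ↥(U \ {t}) => o.elim t (Subtype.val : (U \ {t} : Set M) → M)) := by
    have := hind.comp _ hg
    convert this using 1
    funext o
    match o with
    | none => rfl
    | some a => rfl
  have h3 := (h1.option_iff_transcendental t).mp h2
  rwa [Subtype.range_coe] at h3

theorem mem_adjoin_isAlgebraic {V : Set M} {v : M} (hv : v ∈ adjoin k V) :
    IsAlgebraic (adjoin k V) v := by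
  have : v = algebraMap (adjoin k V) M ⟨v, hv⟩ := rfl
  rw [this]
  exact isAlgebraic_algebraMap _

theorem card_bound (n : ℕ) : ∀ (S E T : Finset M), S.card = n → Disjoint E T →
    (∀ x : M, IsAlgebraic (adjoin k ((S : Set M) ∪ (E : Set M))) x) →
    AlgebraicIndependent k (Subtype.val : (((E : Set M) ∪ (T : Set M)) : Set M) → M) →
    T.card ≤ n := by
  induction n with
  | zero =>
    intro S E T hS hdisj halg hind
    rw [Finset.card_eq_zero] at hS
    subst hS
    by_contra hT
    obtain ⟨t, ht⟩ := Finset.card_pos.mp (by omega : 0 < T.card)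
    have htE : t ∉ E := fun h => (Finset.disjoint_left.mp hdisj) h ht
    have htr : Transcendental (adjoin k (E : Set M)) t := by
      refine transcendental_of_le ?_
        (indep_diff_transcendental hind (Set.mem_union_right _ (Finset.mem_coe.mpr ht)))
      refine adjoin_mono ?_
      intro a ha
      exact ⟨Set.mem_union_left _ ha, fun h => htE (h ▸ ha)⟩
    apply htr
    have := halg t
    rwa [Finset.coe_empty, Set.empty_union] at this
  | succ n ih =>
    intro S E T hS hdisj halg hind
    classical
    by_cases hT0 : T = ∅
    · subst hT0; simp
    obtain ⟨t, ht⟩ := Finset.nonempty_iff_ne_empty.mpr hT0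
    have htE : t ∉ E := fun h => (Finset.disjoint_left.mp hdisj) h ht
    have htU : t ∈ ((E : Set M) ∪ (T : Set M)) := Set.mem_union_right _ (Finset.mem_coe.mpr ht)
    have htrE : Transcendental (adjoin k (E : Set M)) t := by
      refine transcendental_of_le ?_ (indep_diff_transcendental hind htU)
      refine adjoin_mono ?_
      intro a ha
      exact ⟨Set.mem_union_left _ ha, fun h => htE (h ▸ ha)⟩
    -- choose a minimal S' ⊆ S with t algebraic over k(S' ∪ E)
    set 𝒮 := S.powerset.filter
      (fun S' : Finset M => IsAlgebraic (adjoin k (((S' : Finset M) : Set M) ∪ (E : Set M))) t)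
      with h𝒮
    have hS𝒮 : S ∈ 𝒮 := by
      rw [h𝒮, Finset.mem_filter]
      exact ⟨Finset.mem_powerset_self S, halg t⟩
    obtain ⟨S', hS'mem, hS'min⟩ := Finset.exists_min_image 𝒮 Finset.card ⟨S, hS𝒮⟩
    rw [h𝒮, Finset.mem_filter, Finset.mem_powerset] at hS'mem
    obtain ⟨hS'S, hS'alg⟩ := hS'mem
    have hS'ne : S'.Nonempty := by
      rw [Finset.nonempty_iff_ne_empty]
      rintro rfl
      rw [Finset.coe_empty, Set.empty_union] at hS'alg
      exact htrE hS'alg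
    obtain ⟨s, hs⟩ := hS'ne
    have hsS : s ∈ S := hS'S hs
    -- decomposition of the generating set
    have hWeq : ((S' : Set M) ∪ (E : Set M)) =
        insert s (((S'.erase s : Finset M) : Set M) ∪ (E : Set M)) := by
      rw [Finset.coe_erase, ← Set.insert_union, Set.insert_diff_singleton,
        Set.insert_eq_self.mpr (Finset.mem_coe.mpr hs)]
    have h1 : IsAlgebraic
        (adjoin k (insert s (((S'.erase s : Finset M) : Set M) ∪ (E : Set M)))) t := by
      rw [← hWeq]; exact hS'alg
    have h2 : Transcendental
        (adjoin k (((S'.erase s : Finset M) : Set M) ∪ (E : Set M))) t := by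
      intro halg'
      have hmem : S'.erase s ∈ 𝒮 := by
        rw [h𝒮, Finset.mem_filter, Finset.mem_powerset]
        exact ⟨(Finset.erase_subset s S').trans hS'S, halg'⟩
      have := hS'min _ hmem
      have hlt : (S'.erase s).card < S'.card := Finset.card_erase_lt_of_mem hs
      omega
    have hexch := exchange_step h1 h2
    -- apply the induction hypothesis
    have hcardS : (S.erase s).card = n := by
      rw [Finset.card_erase_of_mem hsS, hS]
      omega
    have hdisj₂ : Disjoint (insert t E) (T.erase t) := by
      rw [Finset.disjoint_insert_left]
      exact ⟨Finset.notMem_erase t T, Finset.disjoint_of_subset_right (Finset.erase_subset t T) hdisj⟩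
    have hUeq : (((insert t E : Finset M) : Set M) ∪ ((T.erase t : Finset M) : Set M))
        = ((E : Set M) ∪ (T : Set M)) := by
      rw [Finset.coe_insert, Finset.coe_erase]
      ext a
      by_cases hat : a = t
      · subst hat; simp [ht]
      · simp [hat]
    have hind₂ : AlgebraicIndependent k
        (Subtype.val : ((((insert t E : Finset M) : Set M) ∪ ((T.erase t : Finset M) : Set M)) : Set M) → M) := by
      rw [hUeq]; exact hind
    have hsub₂ : (insert t (((S'.erase s : Finset M) : Set M) ∪ (E : Set M)) : Set M) ⊆
        (((S.erase s : Finset M) : Set M) ∪ ((insert t E : Finset M) : Set M)) := by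
      intro a ha
      rcases ha with rfl | (ha | ha)
      · exact Set.mem_union_right _ (by simp)
      · refine Set.mem_union_left _ ?_
        rw [Finset.coe_erase] at ha ⊢
        exact ⟨hS'S ha.1, ha.2⟩
      · exact Set.mem_union_right _ (by simp [ha, Finset.mem_coe.mp ha])
    have halg₂ : ∀ x : M, IsAlgebraic
        (adjoin k (((S.erase s : Finset M) : Set M) ∪ ((insert t E : Finset M) : Set M))) x := by
      intro x
      refine isAlgebraic_adjoin_trans ?_ (halg x)
      intro v hv
      by_cases hvs : v = s
      · subst hvs
        refine isAlgebraic_of_le ?_ hexch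
        intro a ha
        exact adjoin_mono hsub₂ ha
      · apply mem_adjoin_isAlgebraic
        apply subset_adjoin
        rcases hv with hv | hv
        · exact Set.mem_union_left _ (by rw [Finset.coe_erase]; exact ⟨hv, hvs⟩)
        · exact Set.mem_union_right _ (by simp [hv, Finset.mem_coe.mp hv])
    have hfinal := ih (S.erase s) (insert t E) (T.erase t) hcardS hdisj₂ halg₂ hind₂
    have : t ∈ T := ht
    have := Finset.card_erase_of_mem this
    omega

end Bound



/-- Let `k ⊆ M ⊆ N` be field extensions and `σ` a ring automorphism of `N`
with `σ(k) = k` and `σ(M) ⊆ M`.  Suppose `M` is relatively algebraically closed in `N` and has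
finite transcendence degree over `k` (there is a finite subset of `M` which is a transcendence
basis of `M` over `k`).  Then `σ(M) = M`, i.e. `σ` restricts to an automorphism of `M`.
Here `k` and `M` are realised as the ranges of the structure maps of a tower of fields. -/
theorem automorphism_restricts_to_automorphism_of_finite_trdeg_relatively_closed_subfield
    {k M N : Type*} [Field k] [Field M] [Field N]
    [Algebra k M] [Algebra M N] [Algebra k N] [IsScalarTower k M N]
    (σ : N ≃+* N)
    (hk : σ '' Set.range (algebraMap k N) = Set.range (algebraMap k N))
    (hM : σ '' Set.range (algebraMap M N) ⊆ Set.range (algebraMap M N))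
    (hrel : ∀ x : N, IsAlgebraic M x → x ∈ Set.range (algebraMap M N))
    (hfin : ∃ s : Finset M, IsTranscendenceBasis k fun i : s => (i : M)) :
    σ '' Set.range (algebraMap M N) = Set.range (algebraMap M N) := by
  classical
  obtain ⟨s, hx⟩ := hfin
  have hembinj : Function.Injective (algebraMap M N) := (algebraMap M N).injective
  have hkinj : Function.Injective (algebraMap k N) := (algebraMap k N).injective
  -- construct the automorphism e of k induced by σ
  have hk1 : ∀ a : k, ∃ b : k, algebraMap k N b = σ (algebraMap k N a) := by
    intro a
    have : σ (algebraMap k N a) ∈ Set.range (algebraMap k N) := by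
      rw [← hk]; exact ⟨algebraMap k N a, ⟨a, rfl⟩, rfl⟩
    obtain ⟨b, hb⟩ := this
    exact ⟨b, hb⟩
  have hk2 : ∀ a : k, ∃ b : k, algebraMap k N b = σ.symm (algebraMap k N a) := by
    intro a
    have : algebraMap k N a ∈ σ '' Set.range (algebraMap k N) := by
      rw [hk]; exact ⟨a, rfl⟩
    obtain ⟨r, ⟨b, rfl⟩, hr⟩ := this
    exact ⟨b, by rw [← hr, RingEquiv.symm_apply_apply]⟩
  have key : ∀ a : k, algebraMap k N (Classical.choose (hk1 a)) = σ (algebraMap k N a) :=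
    fun a => Classical.choose_spec (hk1 a)
  have key2 : ∀ a : k, algebraMap k N (Classical.choose (hk2 a)) = σ.symm (algebraMap k N a) :=
    fun a => Classical.choose_spec (hk2 a)
  let e : k ≃+* k :=
    { toFun := fun a => Classical.choose (hk1 a)
      invFun := fun a => Classical.choose (hk2 a)
      left_inv := fun a => hkinj (by rw [key2, key, RingEquiv.symm_apply_apply])
      right_inv := fun a => hkinj (by rw [key, key2, RingEquiv.apply_symm_apply])
      map_add' := fun a b => hkinj (by rw [map_add (algebraMap k N) (Classical.choose (hk1 a)), key, key, key, map_add, map_add])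
      map_mul' := fun a b => hkinj (by rw [map_mul (algebraMap k N) (Classical.choose (hk1 a)), key, key, key, map_mul, map_mul]) }
  have ekey : ∀ a : k, algebraMap k N (e a) = σ (algebraMap k N a) := key
  have ekey2 : ∀ a : k, σ.symm (algebraMap k N a) = algebraMap k N (e.symm a) := by
    intro a
    have := ekey (e.symm a)
    rw [RingEquiv.apply_symm_apply] at this
    rw [this, RingEquiv.symm_apply_apply]
  -- the transcendence basis inside N and its image under σ
  set b : ↥s → N := fun i => algebraMap M N (i : M) with hbdef
  set g : ↥s → N := fun i => σ (b i) with hgdef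
  have hb : AlgebraicIndependent k b := by
    have := hx.1.map' (f := IsScalarTower.toAlgHom k M N) hembinj
    convert this using 1
    rfl
  have hg : AlgebraicIndependent k g := by
    have := hb.ringHom_of_comp_eq e (σ : N ≃+* N)
      (EquivLike.surjective e) (EquivLike.injective σ)
      (by ext a; exact (ekey a))
    convert this using 1
    rfl
  have hgM : ∀ i : ↥s, g i ∈ Set.range (algebraMap M N) :=
    fun i => hM ⟨b i, ⟨(i : M), rfl⟩, rfl⟩
  -- every element of im(M) is algebraic over k(g)
  have hC4 : ∀ y ∈ Set.range (algebraMap M N), IsAlgebraic (adjoin k (Set.range g)) y := by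
    intro y hy
    by_contra hco
    have hopt : AlgebraicIndependent k (fun o : Option ↥s => o.elim y g) :=
      (hg.option_iff_transcendental y).mpr hco
    have hex : ∀ o : Option ↥s, ∃ m : M, algebraMap M N m = (Option.elim o y g) := by
      rintro (_ | i)
      · exact hy
      · exact hgM i
    choose u hu using hex
    have hu' : AlgebraicIndependent k u := by
      apply AlgebraicIndependent.of_comp (IsScalarTower.toAlgHom k M N)
      convert hopt using 1
      funext o
      exact hu o
    have hinj : Function.Injective u := hu'.injective
    set T : Finset M := Finset.univ.image u with hT
    have hTcard : T.card = s.card + 1 := by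
      rw [hT, Finset.card_image_of_injective _ hinj, Finset.card_univ,
        Fintype.card_option, Fintype.card_coe]
    have hTset : (T : Set M) = Set.range u := by
      rw [hT, Finset.coe_image, Finset.coe_univ, Set.image_univ]
    have hindT : AlgebraicIndependent k (Subtype.val : ↥(T : Set M) → M) := by
      rw [hTset]
      exact hu'.coe_range
    have halgS : ∀ x : M,
        IsAlgebraic (adjoin k ((s : Set M) ∪ ((∅ : Finset M) : Set M))) x := by
      intro x
      have h1 := hx.isAlgebraic.isAlgebraic x
      rw [Finset.coe_empty, Set.union_empty]
      have hrange : Set.range (fun i : ↥s => (i : M)) = (s : Set M) := by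
        ext a; simp
      rw [← hrange]
      exact h1
    have := card_bound s.card s ∅ T rfl (Finset.disjoint_empty_left T) halgS
      (by
        have : ((∅ : Finset M) : Set M) ∪ (T : Set M) = (T : Set M) := by
          rw [Finset.coe_empty, Set.empty_union]
        rw [this]
        exact hindT)
    omega
  -- σ.symm maps the adjoin of k and g into im(M)
  have hmem : ∀ c ∈ adjoin k (Set.range g), σ.symm c ∈ Set.range (algebraMap M N) := by
    intro c hc
    set Mr : Subalgebra k N := (IsScalarTower.toAlgHom k M N).range with hMr
    let P : Subalgebra k N :=
      { Subsemiring.comap (σ.symm : N →+* N) Mr.toSubsemiring with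
        algebraMap_mem' := by
          intro r
          show σ.symm (algebraMap k N r) ∈ Mr.toSubsemiring
          rw [ekey2, IsScalarTower.algebraMap_apply k M N]
          exact ⟨algebraMap k M (e.symm r), rfl⟩ }
    have hle : adjoin k (Set.range g) ≤ P := by
      apply adjoin_le
      rintro _ ⟨i, rfl⟩
      show σ.symm (g i) ∈ Mr.toSubsemiring
      rw [hgdef]
      simp only [RingEquiv.symm_apply_apply]
      exact ⟨(i : M), rfl⟩
    exact hle hc
  -- conclude
  apply Set.Subset.antisymm hM
  rintro _ ⟨m, rfl⟩
  have hy : algebraMap M N m ∈ Set.range (algebraMap M N) := ⟨m, rfl⟩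
  have halgy := hC4 _ hy
  -- transfer along σ.symm to show σ.symm (emb m) is algebraic over M
  have hfr : ∀ c : adjoin k (Set.range g), ∃ m' : M, algebraMap M N m' = σ.symm (c : N) :=
    fun c => hmem c c.2
  choose fr hfr' using hfr
  let f : (adjoin k (Set.range g)) →+* M :=
    { toFun := fr
      map_one' := hembinj (by rw [hfr', map_one, OneMemClass.coe_one, map_one])
      map_mul' := fun a b' => hembinj
        (by rw [hfr', map_mul, MulMemClass.coe_mul, map_mul, hfr', hfr'])
      map_zero' := hembinj (by rw [hfr', map_zero, ZeroMemClass.coe_zero, map_zero])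
      map_add' := fun a b' => hembinj
        (by rw [hfr', map_add, AddMemClass.coe_add, map_add, hfr', hfr']) }
  have hfinj : Function.Injective f := by
    intro a b' hab
    apply Subtype.ext
    apply σ.symm.injective
    rw [← hfr' a, ← hfr' b']
    exact congrArg (algebraMap M N) hab
  have halg2 : IsAlgebraic M (σ.symm (algebraMap M N m)) := by
    have := halgy.ringHom_of_comp_eq f (σ.symm : N →+* N) hfinj
      (by ext c; exact (hfr' c))
    exact this
  obtain ⟨m', hm'⟩ := hrel _ halg2
  exact ⟨algebraMap M N m', ⟨m', rfl⟩, by rw [hm', RingEquiv.apply_symm_apply]⟩
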